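/- Let k > 1, ρ > 0 and δ₁ ∈ (−ρ, 0). Let ε₃ ∈ ℝ satisfy k·(ε₃ + δ₁) + sinh(ε₃ + δ₁) = k·(sinh δ₁ + δ₁). Then ε₃ < 0 and |ε₃| ≤ ((k−1)/(k+1))·sinh|δ₁| ≤ ((k−1)/(k+1))·(sinh ρ / ρ)·|δ₁|. -/

import Mathlib

open Real

/-- `sinh` is convex on `[0, ∞)`. -/
lemma convexOn_sinh_Ici : ConvexOn ℝ (Set.Ici (0:ℝ)) Real.sinh := by
  apply convexOn_of_deriv2_nonneg (convex_Ici 0) Real.continuous_sinh.continuousOn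
    Real.differentiable_sinh.differentiableOn
  · simp only [Real.deriv_sinh]
    exact Real.differentiable_cosh.differentiableOn
  · intro x hx
    rw [interior_Ici, Set.mem_Ioi] at hx
    simp only [Function.iterate_succ, Function.iterate_zero, Function.comp_apply, id_eq,
      Real.deriv_sinh, Real.deriv_cosh]
    exact (Real.sinh_pos_iff.2 hx).le

/-- For `0 ≤ t ≤ ρ`, `ρ * sinh t ≤ t * sinh ρ`. -/
lemma sinh_linear_bound {t ρ : ℝ} (ht : 0 ≤ t) (hρ : 0 < ρ) (htρ : t ≤ ρ) :
    Real.sinh t ≤ t / ρ * Real.sinh ρ := by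
  have ha : (0:ℝ) ≤ 1 - t / ρ := by
    have : t / ρ ≤ 1 := (div_le_one hρ).2 htρ; linarith
  have hb : (0:ℝ) ≤ t / ρ := by positivity
  have h := convexOn_sinh_Ici.2 (Set.mem_Ici.2 le_rfl) (Set.mem_Ici.2 hρ.le) ha hb
    (by ring : (1 - t / ρ) + t / ρ = 1)
  have hx : (1 - t / ρ) • (0:ℝ) + (t / ρ) • ρ = t := by
    field_simp
    simp only [smul_zero, zero_add, smul_eq_mul, mul_zero]
    exact div_mul_cancel₀ t hρ.ne'
  rw [hx] at h
  simpa using h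

/-- For `a ≤ b`, `b - a ≤ sinh b - sinh a`. -/
lemma sub_le_sinh_sub {a b : ℝ} (hab : a ≤ b) : b - a ≤ Real.sinh b - Real.sinh a := by
  have h := Real.sinh_sub_id_strictMono.le_iff_le.2 hab
  linarith

theorem statement5 (k ρ δ₁ ε₃ : ℝ) (hk : 1 < k) (hρ : 0 < ρ)
    (hδ₁ : -ρ < δ₁ ∧ δ₁ < 0)
    (heq : k * (ε₃ + δ₁) + Real.sinh (ε₃ + δ₁) = k * (Real.sinh δ₁ + δ₁)) :
    ε₃ < 0 ∧ |ε₃| ≤ (k - 1) / (k + 1) * Real.sinh |δ₁| ∧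
      (k - 1) / (k + 1) * Real.sinh |δ₁| ≤ (k - 1) / (k + 1) * (Real.sinh ρ / ρ) * |δ₁| := by
  obtain ⟨hδρ, hδ0⟩ := hδ₁
  have hsδ : Real.sinh δ₁ < 0 := Real.sinh_neg_iff.2 hδ0
  have key : k * ε₃ + Real.sinh (ε₃ + δ₁) = k * Real.sinh δ₁ := by linarith
  -- ε₃ < 0
  have hε : ε₃ < 0 := by
    by_contra h
    push_neg at h
    have h1 : Real.sinh δ₁ ≤ Real.sinh (ε₃ + δ₁) := Real.sinh_le_sinh.2 (by linarith)
    nlinarith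
  refine ⟨hε, ?_, ?_⟩
  · -- |ε₃| ≤ (k-1)/(k+1) * sinh |δ₁|
    have h1 : (ε₃ + δ₁) ≤ δ₁ := by linarith
    have h2 : δ₁ - (ε₃ + δ₁) ≤ Real.sinh δ₁ - Real.sinh (ε₃ + δ₁) := sub_le_sinh_sub h1
    -- so sinh(ε₃+δ₁) ≤ sinh δ₁ + ε₃
    have h3 : (k + 1) * ε₃ ≥ (k - 1) * Real.sinh δ₁ := by nlinarith
    rw [abs_of_neg hε, abs_of_neg hδ0, Real.sinh_neg]
    rw [ge_iff_le, ← sub_nonneg] at h3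
    rw [div_mul_eq_mul_div, le_div_iff₀ (by linarith)]
    nlinarith
  · -- sinh |δ₁| ≤ (sinh ρ / ρ) * |δ₁|
    have hc : 0 ≤ (k - 1) / (k + 1) := by
      apply div_nonneg <;> linarith
    have h := sinh_linear_bound (t := |δ₁|) (abs_nonneg _) hρ
      (by rw [abs_of_neg hδ0]; linarith)
    have h' : Real.sinh |δ₁| ≤ Real.sinh ρ / ρ * |δ₁| := by
      rw [show Real.sinh ρ / ρ * |δ₁| = |δ₁| / ρ * Real.sinh ρ from by ring]
      exact h
    calc (k - 1) / (k + 1) * Real.sinh |δ₁| ≤ (k - 1) / (k + 1) * (Real.sinh ρ / ρ * |δ₁|) :=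
          mul_le_mul_of_nonneg_left h' hc
      _ = (k - 1) / (k + 1) * (Real.sinh ρ / ρ) * |δ₁| := by ring
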